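/- Let L₁, …, L_M be lists of natural numbers, each sorted in nondecreasing order. Then folding the spike-merge operation over their differential encodings yields the differential encoding of the sorted merge of all of them: foldr merge [] [diff(L₁), …, diff(L_M)] = diff(sortedMerge(L₁, …, L_M)), where sortedMerge(L₁, …, L_M) is the nondecreasing list whose multiset of entries is the sum of the multisets of entries of L₁, …, L_M. -/

import Mathlib

/-- Differential encoding with respect to a previous time. -/
def diffAux : ℕ → List ℕ → List ℕ
  | _, [] => []
  | prev, a :: as => (a - prev) :: diffAux a as

/-- Differential encoding: `diff [a₁, …, aₙ] = [a₁ - 0, a₂ - a₁, …, aₙ - aₙ₋₁]`. -/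
def diff (A : List ℕ) : List ℕ := diffAux 0 A

/-- The spike-merge operation on differential-time encoded spike trains. -/
def smerge : List ℕ → List ℕ → List ℕ
  | [], ys => ys
  | xs, [] => xs
  | x :: xs, y :: ys =>
    if x ≤ y then x :: smerge xs ((y - x) :: ys)
    else y :: smerge ((x - y) :: xs) ys
termination_by xs ys => xs.length + ys.length
decreasing_by all_goals simp

lemma smerge_nil_left (ys : List ℕ) : smerge [] ys = ys := by
  rw [smerge.eq_def]

lemma smerge_nil_right (xs : List ℕ) : smerge xs [] = xs := by
  rw [smerge.eq_def]; cases xs <;> rfl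

lemma smerge_cons (x y : ℕ) (xs ys : List ℕ) :
    smerge (x :: xs) (y :: ys) =
      if x ≤ y then x :: smerge xs ((y - x) :: ys)
      else y :: smerge ((x - y) :: xs) ys := by
  rw [smerge.eq_def]

lemma key : ∀ (A B : List ℕ) (p : ℕ), A.Pairwise (· ≤ ·) → B.Pairwise (· ≤ ·) →
    (∀ x ∈ A, p ≤ x) → (∀ x ∈ B, p ≤ x) →
    smerge (diffAux p A) (diffAux p B) = diffAux p (A.merge B)
  | [], B, p, _, _, _, _ => by simp [diffAux, smerge_nil_left, List.nil_merge]
  | (a :: as), [], p, _, _, _, _ => by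
      simp [diffAux, smerge_nil_right, List.merge]
  | (a :: as), (b :: bs), p, hA, hB, hpA, hpB => by
      have hpa : p ≤ a := hpA a (by simp)
      have hpb : p ≤ b := hpB b (by simp)
      rw [List.pairwise_cons] at hA hB
      rw [diffAux, diffAux, smerge_cons, List.merge]
      by_cases hab : a ≤ b
      · have h1 : a - p ≤ b - p := by omega
        rw [if_pos h1, if_pos (by simpa using hab)]
        have h2 : b - p - (a - p) = b - a := by omega
        rw [h2]
        have h3 : (b - a) :: diffAux b bs = diffAux a (b :: bs) := by rw [diffAux]
        conv_rhs => rw [diffAux]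
        rw [h3, key as (b :: bs) a hA.2 (List.pairwise_cons.mpr hB)
          (fun x hx => hA.1 x hx)
          (fun x hx => by rcases List.mem_cons.mp hx with h | h
                          · omega
                          · exact le_trans hab (hB.1 x h))]
      · have h1 : ¬ (a - p ≤ b - p) := by omega
        rw [if_neg h1, if_neg (by simpa using hab)]
        have h2 : a - p - (b - p) = a - b := by omega
        rw [h2]
        have h3 : (a - b) :: diffAux a as = diffAux b (a :: as) := by rw [diffAux]
        conv_rhs => rw [diffAux]
        rw [h3, key (a :: as) bs b (List.pairwise_cons.mpr hA) hB.2
          (fun x hx => by rcases List.mem_cons.mp hx with h | h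
                          · omega
                          · exact le_trans (by omega) (hA.1 x h))
          (fun x hx => hB.1 x hx)]
  termination_by A B => A.length + B.length
  decreasing_by all_goals simp

lemma smerge_diff (A B : List ℕ) (hA : A.Pairwise (· ≤ ·)) (hB : B.Pairwise (· ≤ ·)) :
    smerge (diff A) (diff B) = diff (A.merge B) :=
  key A B 0 hA hB (fun _ _ => Nat.zero_le _) (fun _ _ => Nat.zero_le _)

lemma sum_coe_eq_flatten (Ls : List (List ℕ)) :
    (Ls.map (fun L => (L : Multiset ℕ))).sum = (Ls.flatten : Multiset ℕ) := by
  induction Ls with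
  | nil => simp
  | cons M Ms ihm =>
      simp at ihm ⊢
      rw [ihm]
      exact (Multiset.coe_add M Ms.flatten).symm

/-- Extension of Proposition 1 to an arbitrary number of spike trains:
folding the spike-merge over the differential encodings yields the
differential encoding of the sorted merge of all the spike trains. -/
theorem foldr_smerge_diff_eq_diff_sortedMerge
    (Ls : List (List ℕ)) (hLs : ∀ L ∈ Ls, L.Pairwise (· ≤ ·))
    (C : List ℕ) (hC : C.Pairwise (· ≤ ·))
    (hCmul : (C : Multiset ℕ) = (Ls.map (fun L => (L : Multiset ℕ))).sum) :
    List.foldr smerge [] (Ls.map diff) = diff C := by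
  induction Ls generalizing C with
  | nil =>
    simp at hCmul
    have : C = [] := by simpa using hCmul
    simp [this, diff, diffAux]
  | cons L Ls ih =>
    have hL : L.Pairwise (· ≤ ·) := hLs L (by simp)
    set C' : List ℕ := Ls.flatten.mergeSort (· ≤ ·) with hC'def
    have hC'perm : C'.Perm Ls.flatten := List.mergeSort_perm _ _
    have hC'sorted : C'.Pairwise (· ≤ ·) := by
      have := List.pairwise_mergeSort (le := fun a b : ℕ => decide (a ≤ b))
        (fun a b c hab hbc => by simp at *; omega)
        (fun a b => by simp; omega) Ls.flatten
      simpa using this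
    have hC'mul : (C' : Multiset ℕ) = (Ls.map (fun L => (L : Multiset ℕ))).sum := by
      rw [Multiset.coe_eq_coe.mpr hC'perm, sum_coe_eq_flatten]
    have hrec := ih (fun M hM => hLs M (by simp [hM])) C' hC'sorted hC'mul
    simp only [List.map_cons, List.foldr_cons, hrec]
    rw [smerge_diff L C' hL hC'sorted]
    have hmsorted : (L.merge C').Pairwise (· ≤ ·) := hL.merge hC'sorted
    have hperm : (L.merge C').Perm C := by
      rw [← Multiset.coe_eq_coe]
      have h4 : ((L.merge C' : List ℕ) : Multiset ℕ) = (L : Multiset ℕ) + (C' : Multiset ℕ) := by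
        rw [Multiset.coe_eq_coe.mpr (List.merge_perm_append _)]; simp
      rw [h4, hC'mul, hCmul]; simp
    rw [hperm.eq_of_pairwise' hmsorted hC]
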